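/- The set Γ_k = {λ ∈ ℝ^n : S_i(λ) > 0 for 1 ≤ i ≤ k} is a convex cone: it is closed under addition and under multiplication by positive scalars. -/

import Mathlib

open scoped BigOperators
noncomputable section

/-- The `k`-th elementary symmetric function of `lam` over an index set `s`. -/
def esymmOn {n : ℕ} (s : Finset (Fin n)) (k : ℕ) (lam : Fin n → ℝ) : ℝ :=
  ∑ t ∈ s.powersetCard k, ∏ i ∈ t, lam i

/-- The `k`-th elementary symmetric polynomial `S_k` on `ℝ^n`. -/
def esymm' (n k : ℕ) (lam : Fin n → ℝ) : ℝ := esymmOn Finset.univ k lam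

/-- The Gårding cone `Γ_k = {λ : S_i(λ) > 0, 1 ≤ i ≤ k}`. -/
def Gamma (n k : ℕ) : Set (Fin n → ℝ) :=
  {lam | ∀ i : ℕ, 1 ≤ i → i ≤ k → 0 < esymm' n i lam}


open Finset Polynomial


/-- elementary symmetric function over any commutative semiring -/
def esym {R : Type*} [CommSemiring R] (n k : ℕ) (f : Fin n → R) : R :=
  ∑ A ∈ Finset.powersetCard k (Finset.univ : Finset (Fin n)), ∏ i ∈ A, f i

lemma esym_zero {R : Type*} [CommSemiring R] (n : ℕ) (f : Fin n → R) : esym n 0 f = 1 := by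
  simp [esym]

lemma map_esym {R S : Type*} [CommSemiring R] [CommSemiring S] (g : R →+* S) (n k : ℕ)
    (f : Fin n → R) : esym n k (fun i => g (f i)) = g (esym n k f) := by
  simp [esym, map_sum, map_prod]

lemma esym_pos {n k : ℕ} (hk : k ≤ n) {f : Fin n → ℝ} (hf : ∀ i, 0 < f i) :
    0 < esym n k f := by
  apply Finset.sum_pos
  · intro A hA
    exact Finset.prod_pos fun i _ => hf i
  · apply Finset.powersetCard_nonempty.2
    simpa using hk

lemma esym_smul {n k : ℕ} (c : ℝ) (f : Fin n → ℝ) :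
    esym n k (fun i => c * f i) = c ^ k * esym n k f := by
  unfold esym
  rw [Finset.mul_sum]
  apply Finset.sum_congr rfl
  intro A hA
  obtain ⟨-, hcard⟩ := Finset.mem_powersetCard.1 hA
  rw [Finset.prod_mul_distrib, Finset.prod_const, hcard]

/-- mixed coefficients of `t ↦ esym (u + t v)` -/
def mE {R : Type*} [CommSemiring R] (n k j : ℕ) (u v : Fin n → R) : R :=
  ∑ A ∈ Finset.powersetCard k (Finset.univ : Finset (Fin n)), ∑ B ∈ A.powersetCard j,
    (∏ i ∈ B, v i) * ∏ i ∈ A \ B, u i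

lemma esym_add_mul {R : Type*} [CommSemiring R] (n k : ℕ) (u v : Fin n → R) (t : R) :
    esym n k (fun i => u i + t * v i) = ∑ j ∈ Finset.range (k+1), mE n k j u v * t ^ j := by
  unfold esym mE
  have h1 : ∀ A ∈ Finset.powersetCard k (Finset.univ : Finset (Fin n)),
      ∏ i ∈ A, (u i + t * v i)
        = ∑ j ∈ Finset.range (k+1), (∑ B ∈ A.powersetCard j,
            (∏ i ∈ B, v i) * ∏ i ∈ A \ B, u i) * t ^ j := by
    intro A hA
    obtain ⟨-, hcard⟩ := Finset.mem_powersetCard.1 hA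
    have : ∀ i ∈ A, u i + t * v i = t * v i + u i := fun i _ => add_comm _ _
    rw [Finset.prod_congr rfl this, Finset.prod_add, Finset.sum_powerset, hcard]
    apply Finset.sum_congr rfl
    intro j hj
    rw [Finset.sum_mul]
    apply Finset.sum_congr rfl
    intro B hB
    obtain ⟨hBA, hBcard⟩ := Finset.mem_powersetCard.1 hB
    rw [Finset.prod_mul_distrib, Finset.prod_const, hBcard]
    ring
  rw [Finset.sum_congr rfl h1, Finset.sum_comm]
  apply Finset.sum_congr rfl
  intro j hj
  rw [Finset.sum_mul]

lemma mE_self {R : Type*} [CommSemiring R] (n k : ℕ) (u v : Fin n → R) :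
    mE n k k u v = esym n k v := by
  unfold mE esym
  apply Finset.sum_congr rfl
  intro A hA
  obtain ⟨-, hcard⟩ := Finset.mem_powersetCard.1 hA
  rw [← hcard, Finset.powersetCard_self, Finset.sum_singleton, Finset.sdiff_self,
    Finset.prod_empty, mul_one]

lemma mE_zero {R : Type*} [CommSemiring R] (n k : ℕ) (u v : Fin n → R) :
    mE n k 0 u v = esym n k u := by
  unfold mE esym
  apply Finset.sum_congr rfl
  intro A hA
  rw [Finset.powersetCard_zero, Finset.sum_singleton, Finset.prod_empty, one_mul,
    Finset.sdiff_empty]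

lemma mE_one {R : Type*} [CommSemiring R] (n k j : ℕ) (hj : j ≤ k) (hk : k ≤ n) (u : Fin n → R) :
    mE n k j u (fun _ => (1:R)) = ((n - k + j).choose j) * esym n (k - j) u := by
  unfold mE esym
  have hL : ∑ A ∈ Finset.powersetCard k (Finset.univ : Finset (Fin n)), ∑ B ∈ A.powersetCard j,
      (∏ i ∈ B, (1:R)) * ∏ i ∈ A \ B, u i
      = ∑ x ∈ (Finset.powersetCard k (Finset.univ : Finset (Fin n))).sigma
          (fun A => A.powersetCard j), ∏ i ∈ x.1 \ x.2, u i := by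
    rw [Finset.sum_sigma]
    apply Finset.sum_congr rfl; intro A _; apply Finset.sum_congr rfl; intro B _
    rw [Finset.prod_const_one, one_mul]
  have hR : (((n - k + j).choose j : R)) * ∑ C ∈ Finset.powersetCard (k - j) (Finset.univ : Finset (Fin n)), ∏ i ∈ C, u i
      = ∑ x ∈ (Finset.powersetCard (k - j) (Finset.univ : Finset (Fin n))).sigma
          (fun C => (Finset.univ \ C).powersetCard j), ∏ i ∈ x.1, u i := by
    rw [Finset.sum_sigma]
    rw [Finset.mul_sum]
    apply Finset.sum_congr rfl
    intro C hC
    obtain ⟨-, hcard⟩ := Finset.mem_powersetCard.1 hC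
    calc (((n - k + j).choose j : R)) * ∏ i ∈ C, u i
        = ∑ _s ∈ Finset.powersetCard j (Finset.univ \ C), ∏ i ∈ C, u i := by
          rw [Finset.sum_const, Finset.card_powersetCard, Finset.card_sdiff_of_subset (Finset.subset_univ C),
            Finset.card_univ, Fintype.card_fin, hcard, nsmul_eq_mul,
            show n - (k - j) = n - k + j by omega]
      _ = ∑ s ∈ Finset.powersetCard j (Finset.univ \ C),
            ∏ i ∈ (⟨C, s⟩ : (_ : Finset (Fin n)) × Finset (Fin n)).1, u i := rfl
  rw [hL, hR]
  apply Finset.sum_nbij' (fun x => ⟨x.1 \ x.2, x.2⟩) (fun x => ⟨x.1 ∪ x.2, x.2⟩)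
  · rintro ⟨A, B⟩ hx
    obtain ⟨hA, hB⟩ := Finset.mem_sigma.1 hx
    obtain ⟨-, hAc⟩ := Finset.mem_powersetCard.1 hA
    obtain ⟨hBA, hBc⟩ := Finset.mem_powersetCard.1 hB
    refine Finset.mem_sigma.2 ⟨Finset.mem_powersetCard.2 ⟨Finset.subset_univ _, ?_⟩,
      Finset.mem_powersetCard.2 ⟨?_, hBc⟩⟩
    · rw [Finset.card_sdiff_of_subset hBA, hAc, hBc]
    · intro b hb
      simp only [Finset.mem_sdiff, Finset.mem_univ, true_and]
      simp only [Finset.mem_sdiff, not_and, not_not]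
      intro _; exact hb
  · rintro ⟨C, B⟩ hx
    obtain ⟨hC, hB⟩ := Finset.mem_sigma.1 hx
    obtain ⟨-, hCc⟩ := Finset.mem_powersetCard.1 hC
    obtain ⟨hBC, hBc⟩ := Finset.mem_powersetCard.1 hB
    have hdisj : Disjoint C B := by
      rw [Finset.disjoint_right]
      intro b hb
      have := hBC hb
      simp only [Finset.mem_sdiff] at this
      exact this.2
    refine Finset.mem_sigma.2 ⟨Finset.mem_powersetCard.2 ⟨Finset.subset_univ _, ?_⟩,
      Finset.mem_powersetCard.2 ⟨Finset.subset_union_right, hBc⟩⟩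
    · rw [Finset.card_union_of_disjoint hdisj, hCc, hBc]
      omega
  · rintro ⟨A, B⟩ hx
    obtain ⟨hA, hB⟩ := Finset.mem_sigma.1 hx
    obtain ⟨hBA, hBc⟩ := Finset.mem_powersetCard.1 hB
    simp only [Sigma.mk.inj_iff, heq_eq_eq, and_true]
    exact Finset.sdiff_union_of_subset hBA
  · rintro ⟨C, B⟩ hx
    obtain ⟨hC, hB⟩ := Finset.mem_sigma.1 hx
    obtain ⟨hBC, hBc⟩ := Finset.mem_powersetCard.1 hB
    have hdisj : Disjoint C B := by
      rw [Finset.disjoint_right]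
      intro b hb
      have := hBC hb
      simp only [Finset.mem_sdiff] at this
      exact this.2
    simp only [Sigma.mk.inj_iff, heq_eq_eq, and_true]
    exact Finset.union_sdiff_cancel_right hdisj
  · rintro ⟨A, B⟩ hx
    rfl

lemma natDeg_deriv (q : Polynomial ℂ) (h : 1 ≤ q.natDegree) :
    (Polynomial.derivative q).natDegree = q.natDegree - 1 := by
  refine le_antisymm (Polynomial.natDegree_derivative_le q) (Polynomial.le_natDegree_of_ne_zero ?_)
  rw [Polynomial.coeff_derivative]
  have hq0 : q ≠ 0 := fun h0 => by simp [h0] at h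
  have h1 : q.coeff (q.natDegree - 1 + 1) ≠ 0 := by
    rw [Nat.sub_add_cancel h]
    exact Polynomial.leadingCoeff_ne_zero.2 hq0
  have h2 : ((q.natDegree - 1 : ℕ) + 1 : ℂ) ≠ 0 := by
    exact_mod_cast Nat.succ_ne_zero (q.natDegree - 1)
  exact mul_ne_zero h1 h2

lemma deriv_ne_zero (q : Polynomial ℂ) (h : 1 ≤ q.natDegree) : Polynomial.derivative q ≠ 0 := by
  intro h0
  have := Polynomial.natDegree_eq_zero_of_derivative_eq_zero h0
  omega

/-- half-plane Gauss-Lucas step -/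
lemma roots_deriv_im (p : Polynomial ℂ) (hp : p ≠ 0) (hdeg : 1 ≤ p.natDegree)
    (h : ∀ z, p.IsRoot z → z.im < 0) :
    ∀ z, (Polynomial.derivative p).IsRoot z → z.im < 0 := by
  intro z hz
  by_contra hzi
  push_neg at hzi
  have hzroot : ¬ p.IsRoot z := fun hr => absurd (h z hr) (by linarith)
  have hsp : p.Splits := IsAlgClosed.splits p
  have hfact := hsp.eq_prod_roots
  have hcard : Multiset.card p.roots = p.natDegree := Polynomial.splits_iff_card_roots.1 hsp
  have hroots_ne : p.roots ≠ 0 := by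
    intro h0; rw [h0] at hcard; simp at hcard; omega
  have hroot_im : ∀ a ∈ p.roots, a.im < 0 := fun a ha =>
    h a ((Polynomial.mem_roots hp).1 ha)
  have hevalp : Polynomial.eval z p
      = p.leadingCoeff * (Multiset.map (fun a => z - a) p.roots).prod := by
    conv_lhs => rw [hfact]
    rw [Polynomial.eval_mul, Polynomial.eval_C, Polynomial.eval_multiset_prod]
    congr 2
    rw [Multiset.map_map]
    apply Multiset.map_congr rfl
    intro a _
    simp
  have hPz : (Multiset.map (fun a => z - a) p.roots).prod ≠ 0 := by
    intro h0
    apply hzroot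
    unfold Polynomial.IsRoot
    rw [hevalp, h0, mul_zero]
  have hza : ∀ a ∈ p.roots, z - a ≠ 0 := by
    intro a ha h0
    apply hPz
    apply Multiset.prod_eq_zero
    rw [← h0]
    exact Multiset.mem_map_of_mem _ ha
  have hderiv : Polynomial.derivative p = Polynomial.C p.leadingCoeff *
      (Multiset.map (fun a =>
        (Multiset.map (fun b => Polynomial.X - Polynomial.C b) (p.roots.erase a)).prod)
        p.roots).sum := by
    conv_lhs => rw [hfact]
    rw [Polynomial.derivative_C_mul, Polynomial.derivative_prod]
    congr 1
    apply congrArg Multiset.sum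
    apply Multiset.map_congr rfl
    intro a _
    rw [Polynomial.derivative_X_sub_C, mul_one]
  have hevald : Polynomial.eval z (Polynomial.derivative p)
      = p.leadingCoeff * (Multiset.map (fun a =>
          (Multiset.map (fun b => z - b) (p.roots.erase a)).prod) p.roots).sum := by
    rw [hderiv, Polynomial.eval_mul, Polynomial.eval_C]
    congr 1
    have hmms := map_multiset_sum (Polynomial.evalRingHom z)
      (Multiset.map (fun a =>
        (Multiset.map (fun b => Polynomial.X - Polynomial.C b) (p.roots.erase a)).prod) p.roots)
    simp only [Polynomial.coe_evalRingHom] at hmms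
    rw [hmms]
    apply congrArg Multiset.sum
    rw [Multiset.map_map]
    apply Multiset.map_congr rfl
    intro a _
    simp only [Function.comp_apply, Polynomial.coe_evalRingHom, Polynomial.eval_multiset_prod]
    rw [Multiset.map_map]
    apply congrArg Multiset.prod
    apply Multiset.map_congr rfl
    intro b _
    simp
  have hterm : ∀ a ∈ p.roots, (Multiset.map (fun b => z - b) (p.roots.erase a)).prod
      = (z - a)⁻¹ * (Multiset.map (fun b => z - b) p.roots).prod := by
    intro a ha
    have hpe := Multiset.prod_map_erase (f := fun b => z - b) ha
    rw [← hpe, ← mul_assoc, inv_mul_cancel₀ (hza a ha), one_mul]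
  have hsum : (Multiset.map (fun a =>
        (Multiset.map (fun b => z - b) (p.roots.erase a)).prod) p.roots).sum
      = (Multiset.map (fun a => (z - a)⁻¹) p.roots).sum
          * (Multiset.map (fun b => z - b) p.roots).prod := by
    rw [← Multiset.sum_map_mul_right]
    apply congrArg Multiset.sum
    exact Multiset.map_congr rfl hterm
  have him : ∀ (s : Multiset ℂ), s.sum.im = (s.map Complex.im).sum := by
    intro s
    induction s using Multiset.induction with
    | empty => simp
    | cons a s ih => simp [ih]
  have hS : ((Multiset.map (fun a => (z - a)⁻¹) p.roots).sum).im < 0 := by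
    rw [him, Multiset.map_map]
    have hneg : ∀ a ∈ p.roots, (Complex.im ∘ fun a => (z - a)⁻¹) a < (fun _ => (0:ℝ)) a := by
      intro a ha
      simp only [Function.comp_apply]
      rw [Complex.inv_im]
      have h1 : 0 < (z - a).im := by
        rw [Complex.sub_im]
        have := hroot_im a ha
        linarith
      have h2 : 0 < Complex.normSq (z - a) := Complex.normSq_pos.2 (hza a ha)
      exact div_neg_of_neg_of_pos (by linarith) h2
    calc (Multiset.map (Complex.im ∘ fun a => (z - a)⁻¹) p.roots).sum
        < (Multiset.map (fun _ => (0:ℝ)) p.roots).sum :=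
          Multiset.sum_lt_sum_of_nonempty hroots_ne hneg
      _ = 0 := by simp
  have hSne : (Multiset.map (fun a => (z - a)⁻¹) p.roots).sum ≠ 0 := by
    intro h0
    rw [h0] at hS
    simp at hS
  have heval_ne : Polynomial.eval z (Polynomial.derivative p) ≠ 0 := by
    rw [hevald, hsum, ← mul_assoc]
    exact mul_ne_zero (mul_ne_zero (Polynomial.leadingCoeff_ne_zero.2 hp) hSne) hPz
  exact heval_ne hz

lemma iter_deriv_im (p : Polynomial ℂ) (hp : p ≠ 0) (h : ∀ z, p.IsRoot z → z.im < 0) :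
    ∀ m, m ≤ p.natDegree →
      (Polynomial.derivative^[m] p ≠ 0 ∧ (Polynomial.derivative^[m] p).natDegree = p.natDegree - m
        ∧ ∀ z, (Polynomial.derivative^[m] p).IsRoot z → z.im < 0) := by
  intro m
  induction m with
  | zero => intro _; exact ⟨hp, by simp, h⟩
  | succ m ih =>
    intro hm
    obtain ⟨h1, h2, h3⟩ := ih (by omega)
    have hdeg1 : 1 ≤ (Polynomial.derivative^[m] p).natDegree := by omega
    refine ⟨?_, ?_, ?_⟩
    · rw [Function.iterate_succ_apply']
      exact deriv_ne_zero _ hdeg1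
    · rw [Function.iterate_succ_apply', natDeg_deriv _ hdeg1, h2]
      omega
    · rw [Function.iterate_succ_apply']
      exact roots_deriv_im _ h1 hdeg1 h3

/-- stability of elementary symmetric polynomials -/
lemma esym_stab (n k : ℕ) (hk1 : 1 ≤ k) (hkn : k ≤ n) (z : Fin n → ℂ)
    (hz : ∀ i, 0 < (z i).im) : esym n k z ≠ 0 := by
  classical
  set p : Polynomial ℂ := ∏ i ∈ (Finset.univ : Finset (Fin n)), (Polynomial.X + Polynomial.C (z i)) with hpdef
  have hmonic : p.Monic :=
    Polynomial.monic_prod_of_monic _ _ (fun i _ => Polynomial.monic_X_add_C _)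
  have hdeg : p.natDegree = n := by
    rw [hpdef, Polynomial.natDegree_prod_of_monic _ _ (fun i _ => Polynomial.monic_X_add_C _)]
    simp [Polynomial.natDegree_X_add_C]
  have hp0 : p ≠ 0 := hmonic.ne_zero
  have hroots : ∀ w, p.IsRoot w → w.im < 0 := by
    intro w hw
    unfold Polynomial.IsRoot at hw
    rw [hpdef, Polynomial.eval_prod] at hw
    simp only [Polynomial.eval_add, Polynomial.eval_X, Polynomial.eval_C] at hw
    obtain ⟨i, -, hi⟩ := Finset.prod_eq_zero_iff.1 hw
    have : w = -z i := by linear_combination hi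
    rw [this]
    simp only [Complex.neg_im]
    linarith [hz i]
  obtain ⟨hq0, hqdeg, hqroots⟩ := iter_deriv_im p hp0 hroots (n - k) (by omega)
  have h0root : ¬ (Polynomial.derivative^[n-k] p).IsRoot 0 := by
    intro h0
    have := hqroots 0 h0
    simp at this
  have hcoeff0 : (Polynomial.derivative^[n-k] p).coeff 0 ≠ 0 := by
    rw [Polynomial.coeff_zero_eq_eval_zero]
    exact h0root
  rw [Polynomial.coeff_iterate_derivative] at hcoeff0
  rw [nsmul_eq_mul] at hcoeff0
  have hcoeffk : p.coeff (0 + (n-k)) ≠ 0 := by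
    intro h0
    rw [h0, mul_zero] at hcoeff0
    exact hcoeff0 rfl
  rw [zero_add] at hcoeffk
  have hco : p.coeff (n - k) = esym n k z := by
    rw [hpdef]
    have hcard : (Finset.univ : Finset (Fin n)).card = n := by simp
    rw [Finset.prod_X_add_C_coeff _ z (by rw [hcard]; omega), hcard,
      show n - (n - k) = k by omega]
    rfl
  rw [hco] at hcoeffk
  exact hcoeffk

open Filter Topology

/-- root bound -/
lemma root_bound {k : ℕ} (hk : 1 ≤ k) (c : ℕ → ℂ) (z : ℂ)
    (h : ∑ j ∈ Finset.range (k+1), c j * z ^ j = 0) (hck : c k ≠ 0) :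
    ‖z‖ ≤ 1 + (∑ j ∈ Finset.range k, ‖c j‖) / ‖c k‖ := by
  have hck' : 0 < ‖c k‖ := norm_pos_iff.2 hck
  have hnn : 0 ≤ (∑ j ∈ Finset.range k, ‖c j‖) / ‖c k‖ :=
    div_nonneg (Finset.sum_nonneg fun j _ => norm_nonneg _) hck'.le
  by_cases hz : ‖z‖ ≤ 1
  · linarith
  push_neg at hz
  have h1 : c k * z ^ k = -∑ j ∈ Finset.range k, c j * z ^ j := by
    rw [Finset.sum_range_succ] at h
    linear_combination h
  have h2 : ‖c k‖ * ‖z‖ ^ k ≤ (∑ j ∈ Finset.range k, ‖c j‖) * ‖z‖ ^ (k-1) := by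
    calc ‖c k‖ * ‖z‖ ^ k = ‖c k * z ^ k‖ := by rw [norm_mul, norm_pow]
      _ = ‖∑ j ∈ Finset.range k, c j * z ^ j‖ := by rw [h1, norm_neg]
      _ ≤ ∑ j ∈ Finset.range k, ‖c j * z ^ j‖ := norm_sum_le _ _
      _ ≤ ∑ j ∈ Finset.range k, ‖c j‖ * ‖z‖ ^ (k-1) := by
          apply Finset.sum_le_sum
          intro j hj
          rw [norm_mul, norm_pow]
          apply mul_le_mul_of_nonneg_left _ (norm_nonneg _)
          apply pow_le_pow_right₀ (by linarith)
          have := Finset.mem_range.1 hj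
          omega
      _ = (∑ j ∈ Finset.range k, ‖c j‖) * ‖z‖ ^ (k-1) := by rw [Finset.sum_mul]
  have hzpow : 0 < ‖z‖ ^ (k-1) := pow_pos (by linarith) _
  have h3 : ‖c k‖ * ‖z‖ ≤ ∑ j ∈ Finset.range k, ‖c j‖ := by
    have hpow : ‖z‖ ^ k = ‖z‖ ^ (k-1) * ‖z‖ := by
      rw [← pow_succ]
      congr 1
      omega
    have h2' : (‖c k‖ * ‖z‖) * ‖z‖^(k-1) ≤ (∑ j ∈ Finset.range k, ‖c j‖) * ‖z‖^(k-1) := by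
      calc (‖c k‖ * ‖z‖) * ‖z‖^(k-1) = ‖c k‖ * ‖z‖^k := by rw [hpow]; ring
        _ ≤ _ := h2
    exact le_of_mul_le_mul_right h2' hzpow
  have : ‖z‖ ≤ (∑ j ∈ Finset.range k, ‖c j‖) / ‖c k‖ := by
    rw [le_div_iff₀ hck']
    linarith [h3]
  linarith

lemma esym_tendsto {n k : ℕ} (w : ℕ → Fin n → ℂ) (W : Fin n → ℂ)
    (hw : ∀ i, Tendsto (fun m => w m i) atTop (𝓝 (W i))) :
    Tendsto (fun m => esym n k (w m)) atTop (𝓝 (esym n k W)) := by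
  unfold esym
  apply tendsto_finset_sum
  intro A _
  exact tendsto_finset_prod _ fun i _ => hw i

lemma mE_tendsto {n k j : ℕ} (u v : ℕ → Fin n → ℂ) (U V : Fin n → ℂ)
    (hu : ∀ i, Tendsto (fun m => u m i) atTop (𝓝 (U i)))
    (hv : ∀ i, Tendsto (fun m => v m i) atTop (𝓝 (V i))) :
    Tendsto (fun m => mE n k j (u m) (v m)) atTop (𝓝 (mE n k j U V)) := by
  unfold mE
  apply tendsto_finset_sum
  intro A _
  apply tendsto_finset_sum
  intro B _
  exact (tendsto_finset_prod _ fun i _ => hv i).mul (tendsto_finset_prod _ fun i _ => hu i)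

/-- the polynomial `t ↦ esym (u + t v)` -/
def Qp (n k : ℕ) (u v : Fin n → ℂ) : Polynomial ℂ :=
  ∑ j ∈ Finset.range (k+1), Polynomial.C (mE n k j u v) * Polynomial.X ^ j

lemma Qp_eval (n k : ℕ) (u v : Fin n → ℂ) (z : ℂ) :
    (Qp n k u v).eval z = esym n k (fun i => u i + z * v i) := by
  rw [Qp, Polynomial.eval_finset_sum, esym_add_mul]
  apply Finset.sum_congr rfl
  intro j _
  simp

lemma Qp_coeff (n k : ℕ) (u v : Fin n → ℂ) (j : ℕ) (hj : j ≤ k) :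
    (Qp n k u v).coeff j = mE n k j u v := by
  rw [Qp, Polynomial.finset_sum_coeff]
  rw [Finset.sum_eq_single j]
  · simp
  · intro b _ hbj
    rw [Polynomial.coeff_C_mul, Polynomial.coeff_X_pow, if_neg (fun h => hbj h.symm), mul_zero]
  · intro hj'
    simp at hj'
    omega

lemma Qp_coeff_high (n k : ℕ) (u v : Fin n → ℂ) (j : ℕ) (hj : k < j) :
    (Qp n k u v).coeff j = 0 := by
  rw [Qp, Polynomial.finset_sum_coeff]
  apply Finset.sum_eq_zero
  intro b hb
  have := Finset.mem_range.1 hb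
  rw [Polynomial.coeff_C_mul, Polynomial.coeff_X_pow, if_neg (by omega), mul_zero]

lemma Qp_natDegree (n k : ℕ) (u v : Fin n → ℂ) (hv : esym n k v ≠ 0) :
    (Qp n k u v).natDegree = k ∧ (Qp n k u v).leadingCoeff = esym n k v := by
  have hle : (Qp n k u v).natDegree ≤ k :=
    Polynomial.natDegree_le_iff_coeff_eq_zero.2 fun j hj => Qp_coeff_high n k u v j hj
  have hck : (Qp n k u v).coeff k = esym n k v := by
    rw [Qp_coeff n k u v k le_rfl, mE_self]
  have hge : k ≤ (Qp n k u v).natDegree :=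
    Polynomial.le_natDegree_of_ne_zero (by rw [hck]; exact hv)
  have hdeg : (Qp n k u v).natDegree = k := le_antisymm hle hge
  exact ⟨hdeg, by rw [Polynomial.leadingCoeff, hdeg, hck]⟩

/-- every complex polynomial of known degree factors through a root vector -/
lemma exists_root_vector (q : Polynomial ℂ) (k : ℕ) (h : q.natDegree = k) (hq : q ≠ 0) :
    ∃ r : Fin k → ℂ, (∀ i, q.IsRoot (r i)) ∧
      ∀ z, q.eval z = q.leadingCoeff * ∏ i : Fin k, (z - r i) := by
  have hsp : q.Splits := IsAlgClosed.splits q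
  have hcard : Multiset.card q.roots = k := by
    rw [Polynomial.splits_iff_card_roots.1 hsp, h]
  have hlen : q.roots.toList.length = k := by rw [Multiset.length_toList, hcard]
  refine ⟨fun i => q.roots.toList.get (Fin.cast hlen.symm i), ?_, ?_⟩
  · intro i
    have hmem : q.roots.toList.get (Fin.cast hlen.symm i) ∈ q.roots := by
      rw [← Multiset.mem_toList]
      exact List.get_mem _ _
    exact (Polynomial.mem_roots hq).1 hmem
  · intro z
    have hfact := hsp.eq_prod_roots
    conv_lhs => rw [hfact]
    rw [Polynomial.eval_mul, Polynomial.eval_C, Polynomial.eval_multiset_prod]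
    congr 1
    rw [Multiset.map_map]
    have hlist : (Multiset.map (Polynomial.eval z ∘ fun a => Polynomial.X - Polynomial.C a)
        q.roots).prod = (q.roots.toList.map (fun a => z - a)).prod := by
      conv_lhs => rw [← Multiset.coe_toList q.roots]
      rw [Multiset.map_coe, Multiset.prod_coe]
      congr 1
      apply List.map_congr_left
      intro a _
      simp
    rw [hlist]
    conv_lhs => rw [show q.roots.toList = List.ofFn (q.roots.toList.get) from
      (List.ofFn_get _).symm]
    rw [List.map_ofFn, List.prod_ofFn]
    exact (Fin.prod_congr' (fun i => z - q.roots.toList.get i) hlen.symm).symm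

lemma eventual_bound_abstract {k : ℕ} (hk : 1 ≤ k) (c : ℕ → ℕ → ℂ) (CC : ℕ → ℂ)
    (hcoef : ∀ j, j ≤ k → Tendsto (fun m => c m j) atTop (𝓝 (CC j)))
    (hCk : CC k ≠ 0) :
    ∃ M : ℝ, 0 ≤ M ∧ ∃ N : ℕ, ∀ m, N ≤ m → (c m k ≠ 0) ∧
      ∀ z : ℂ, (∑ j ∈ Finset.range (k+1), c m j * z ^ j = 0) → ‖z‖ ≤ M := by
  have hS : Tendsto (fun m => ∑ j ∈ Finset.range k, ‖c m j‖) atTop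
      (𝓝 (∑ j ∈ Finset.range k, ‖CC j‖)) :=
    tendsto_finset_sum _ fun j hj => ((hcoef j (Finset.mem_range.1 hj).le).norm)
  have hL : 0 < ‖CC k‖ := norm_pos_iff.2 hCk
  have hlead : Tendsto (fun m => ‖c m k‖) atTop (𝓝 ‖CC k‖) := (hcoef k le_rfl).norm
  have hS0nn : 0 ≤ ∑ j ∈ Finset.range k, ‖CC j‖ :=
    Finset.sum_nonneg fun j _ => norm_nonneg _
  have hev1 : ∀ᶠ m in atTop, ‖CC k‖ / 2 < ‖c m k‖ :=
    hlead.eventually (eventually_gt_nhds (by linarith))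
  have hev2 : ∀ᶠ m in atTop, (∑ j ∈ Finset.range k, ‖c m j‖)
      < (∑ j ∈ Finset.range k, ‖CC j‖) + 1 :=
    hS.eventually (eventually_lt_nhds (by linarith))
  obtain ⟨N, hN⟩ := (hev1.and hev2).exists_forall_of_atTop
  refine ⟨1 + ((∑ j ∈ Finset.range k, ‖CC j‖) + 1) / (‖CC k‖ / 2), by positivity, N, ?_⟩
  intro m hm
  obtain ⟨h1, h2⟩ := hN m hm
  have hcmk : c m k ≠ 0 := by
    intro h0
    rw [h0, norm_zero] at h1
    linarith
  refine ⟨hcmk, ?_⟩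
  intro z hz
  have hrb := root_bound hk (c m) z hz hcmk
  have hdiv : (∑ j ∈ Finset.range k, ‖c m j‖) / ‖c m k‖
      ≤ ((∑ j ∈ Finset.range k, ‖CC j‖) + 1) / (‖CC k‖ / 2) :=
    div_le_div₀ (by linarith) h2.le (by linarith) h1.le
  linarith

lemma eventual_bound {n k : ℕ} (hk : 1 ≤ k) (u v : ℕ → Fin n → ℂ) (U V : Fin n → ℂ)
    (hu : ∀ i, Tendsto (fun m => u m i) atTop (𝓝 (U i)))
    (hv : ∀ i, Tendsto (fun m => v m i) atTop (𝓝 (V i)))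
    (hV : esym n k V ≠ 0) :
    ∃ M : ℝ, 0 ≤ M ∧ ∃ N : ℕ, ∀ m, N ≤ m → (esym n k (v m) ≠ 0) ∧
      ∀ z : ℂ, esym n k (fun i => u m i + z * v m i) = 0 → ‖z‖ ≤ M := by
  obtain ⟨M, hM0, N, hMN⟩ := eventual_bound_abstract hk
    (fun m j => mE n k j (u m) (v m)) (fun j => mE n k j U V)
    (fun j _ => mE_tendsto u v U V hu hv)
    (by show mE n k k U V ≠ 0; rw [mE_self]; exact hV)
  refine ⟨M, hM0, N, ?_⟩
  intro m hm
  obtain ⟨h1, h2⟩ := hMN m hm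
  refine ⟨by rw [← mE_self n k (u m) (v m)]; exact h1, ?_⟩
  intro z hz
  apply h2
  rw [← esym_add_mul]
  exact hz

lemma LIM2 {n k : ℕ} (hk : 1 ≤ k) (u v : ℕ → Fin n → ℂ) (U V : Fin n → ℂ)
    (hu : ∀ i, Tendsto (fun m => u m i) atTop (𝓝 (U i)))
    (hv : ∀ i, Tendsto (fun m => v m i) atTop (𝓝 (V i)))
    (hV : esym n k V ≠ 0)
    (hroot : ∀ m, ∃ z : ℂ, esym n k (fun i => u m i + z * v m i) = 0 ∧ 0 ≤ z.im) :
    ∃ z : ℂ, esym n k (fun i => U i + z * V i) = 0 ∧ 0 ≤ z.im := by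
  obtain ⟨M, hM0, N, hMN⟩ := eventual_bound hk u v U V hu hv hV
  choose zf hz1 hz2 using hroot
  set w := fun m => zf (m + N) with hw
  have hwb : ∀ m, w m ∈ Metric.closedBall (0:ℂ) M := by
    intro m
    rw [Metric.mem_closedBall, dist_zero_right]
    exact (hMN (m+N) (by omega)).2 _ (hz1 (m+N))
  obtain ⟨z₀, -, φ, hφ, hzt⟩ := tendsto_subseq_of_bounded Metric.isBounded_closedBall hwb
  have hφt : Tendsto (fun m => φ m + N) atTop atTop :=
    (tendsto_add_atTop_nat N).comp hφ.tendsto_atTop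
  have him : 0 ≤ z₀.im := by
    have ht : Tendsto (fun m => (w (φ m)).im) atTop (𝓝 z₀.im) :=
      (Complex.continuous_im.tendsto z₀).comp hzt
    exact le_of_tendsto_of_tendsto' tendsto_const_nhds ht (fun m => hz2 _)
  have heval : Tendsto (fun m => esym n k (fun i => u (φ m + N) i + w (φ m) * v (φ m + N) i))
      atTop (𝓝 (esym n k (fun i => U i + z₀ * V i))) := by
    apply esym_tendsto
    intro i
    exact ((hu i).comp hφt).add (hzt.mul ((hv i).comp hφt))
  have hzero : Tendsto (fun m => esym n k (fun i => u (φ m + N) i + w (φ m) * v (φ m + N) i))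
      atTop (𝓝 (0:ℂ)) := by
    have : (fun m => esym n k (fun i => u (φ m + N) i + w (φ m) * v (φ m + N) i))
        = fun _ => (0:ℂ) := by
      funext m
      exact hz1 (φ m + N)
    rw [this]
    exact tendsto_const_nhds
  exact ⟨z₀, tendsto_nhds_unique heval hzero, him⟩

lemma LIM1 {n k : ℕ} (hk : 1 ≤ k) (u v : ℕ → Fin n → ℂ) (U V : Fin n → ℂ)
    (hu : ∀ i, Tendsto (fun m => u m i) atTop (𝓝 (U i)))
    (hv : ∀ i, Tendsto (fun m => v m i) atTop (𝓝 (V i)))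
    (hV : esym n k V ≠ 0)
    (hroot : ∀ m, ∀ z : ℂ, esym n k (fun i => u m i + z * v m i) = 0 → z.im < 0) :
    ∀ z : ℂ, esym n k (fun i => U i + z * V i) = 0 → z.im ≤ 0 := by
  obtain ⟨M, hM0, N, hMN⟩ := eventual_bound hk u v U V hu hv hV
  have hfact : ∀ m : ℕ, ∃ r : Fin k → ℂ, (∀ i, (r i).im < 0 ∧ ‖r i‖ ≤ M) ∧
      ∀ z, esym n k (fun i => u (m+N) i + z * v (m+N) i)
        = esym n k (v (m+N)) * ∏ i : Fin k, (z - r i) := by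
    intro m
    have hvm : esym n k (v (m+N)) ≠ 0 := (hMN _ (by omega)).1
    obtain ⟨hdeg, hlc⟩ := Qp_natDegree n k (u (m+N)) (v (m+N)) hvm
    have hQ0 : Qp n k (u (m+N)) (v (m+N)) ≠ 0 := by
      intro h0
      rw [h0] at hlc
      simp at hlc
      exact hvm hlc.symm
    obtain ⟨r, hr1, hr2⟩ := exists_root_vector _ k hdeg hQ0
    have hre : ∀ i, esym n k (fun j => u (m+N) j + (r i) * v (m+N) j) = 0 := by
      intro i
      rw [← Qp_eval]
      exact hr1 i
    refine ⟨r, fun i => ⟨hroot (m+N) (r i) (hre i), (hMN _ (by omega)).2 (r i) (hre i)⟩,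
      fun z => ?_⟩
    rw [← Qp_eval, hr2 z, hlc]
  choose rf hrf1 hrf2 using hfact
  have hrb : ∀ m, rf m ∈ Metric.closedBall (0 : Fin k → ℂ) M := by
    intro m
    rw [Metric.mem_closedBall]
    rw [dist_pi_le_iff hM0]
    intro i
    simp only [Pi.zero_apply, dist_zero_right]
    exact (hrf1 m i).2
  obtain ⟨R, -, φ, hφ, hRt⟩ := tendsto_subseq_of_bounded Metric.isBounded_closedBall hrb
  have hRlim : ∀ i, Tendsto (fun m => rf (φ m) i) atTop (𝓝 (R i)) := by
    rw [tendsto_pi_nhds] at hRt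
    exact fun i => hRt i
  have hRim : ∀ i, (R i).im ≤ 0 := by
    intro i
    have ht : Tendsto (fun m => (rf (φ m) i).im) atTop (𝓝 ((R i).im)) :=
      (Complex.continuous_im.tendsto _).comp (hRlim i)
    exact le_of_tendsto_of_tendsto' ht tendsto_const_nhds (fun m => (hrf1 (φ m) i).1.le)
  intro z hz
  have hφt : Tendsto (fun m => φ m + N) atTop atTop :=
    (tendsto_add_atTop_nat N).comp hφ.tendsto_atTop
  have h1 : Tendsto (fun m => esym n k (fun i => u (φ m + N) i + z * v (φ m + N) i))
      atTop (𝓝 (esym n k (fun i => U i + z * V i))) := by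
    apply esym_tendsto
    intro i
    exact ((hu i).comp hφt).add (tendsto_const_nhds.mul ((hv i).comp hφt))
  have h2 : Tendsto (fun m => esym n k (fun i => u (φ m + N) i + z * v (φ m + N) i))
      atTop (𝓝 (esym n k V * ∏ i : Fin k, (z - R i))) := by
    have heq : (fun m => esym n k (fun i => u (φ m + N) i + z * v (φ m + N) i))
        = fun m => esym n k (v (φ m + N)) * ∏ i : Fin k, (z - rf (φ m) i) := by
      funext m
      exact hrf2 (φ m) z
    rw [heq]
    apply Tendsto.mul
    · exact esym_tendsto (fun m => v (m)) V hv |>.comp hφt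
    · exact tendsto_finset_prod _ fun i _ => tendsto_const_nhds.sub (hRlim i)
  have hid := tendsto_nhds_unique h1 h2
  rw [hz] at hid
  have hprod : (∏ i : Fin k, (z - R i)) = 0 := by
    rcases mul_eq_zero.1 hid.symm with h | h
    · exact absurd h hV
    · exact h
  obtain ⟨i, -, hi⟩ := Finset.prod_eq_zero_iff.1 hprod
  have : z = R i := by linear_combination hi
  rw [this]
  exact hRim i

/-- membership in the Garding cone, as a predicate on `esym` -/
def GP (n k : ℕ) (w : Fin n → ℝ) : Prop := ∀ j, 1 ≤ j → j ≤ k → 0 < esym n j w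

lemma GP_mono {n k j : ℕ} (hjk : j ≤ k) {w : Fin n → ℝ} (h : GP n k w) : GP n j w :=
  fun i hi1 hi2 => h i hi1 (hi2.trans hjk)

lemma esym_shift_pos {n k : ℕ} (hk1 : 1 ≤ k) (hkn : k ≤ n) {w : Fin n → ℝ} (hw : GP n k w)
    {t : ℝ} (ht : 0 ≤ t) : 0 < esym n k (fun i => w i + t) := by
  have h1 : esym n k (fun i => w i + t * 1) = ∑ j ∈ Finset.range (k+1),
      mE n k j w (fun _ => (1:ℝ)) * t ^ j := esym_add_mul n k w (fun _ => 1) t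
  simp only [mul_one] at h1
  rw [h1]
  apply Finset.sum_pos'
  · intro j hj
    have hjk : j ≤ k := by
      have := Finset.mem_range.1 hj
      omega
    rw [mE_one n k j hjk hkn]
    have hch : 0 < ((n - k + j).choose j : ℝ) := by
      exact_mod_cast Nat.choose_pos (by omega)
    have hesym : 0 < esym n (k - j) w := by
      rcases Nat.eq_or_lt_of_le hjk with h | h
      · rw [h]
        simp [esym_zero]
      · exact hw (k - j) (by omega) (by omega)
    positivity
  · refine ⟨0, Finset.mem_range.2 (by omega), ?_⟩
    rw [mE_one n k 0 (by omega) hkn]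
    simp only [Nat.choose_zero_right, Nat.cast_one, one_mul, pow_zero, mul_one, Nat.sub_zero]
    exact hw k hk1 le_rfl

lemma GP_shift {n k : ℕ} (hkn : k ≤ n) {w : Fin n → ℝ} (hw : GP n k w) {t : ℝ} (ht : 0 ≤ t) :
    GP n k (fun i => w i + t) :=
  fun j hj1 hj2 => esym_shift_pos hj1 (hj2.trans hkn) (GP_mono hj2 hw) ht

lemma mE_pos {n k j : ℕ} (hj : j ≤ k) (hk : k ≤ n) {u v : Fin n → ℝ}
    (hu : ∀ i, 0 < u i) (hv : ∀ i, 0 < v i) : 0 < mE n k j u v := by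
  unfold mE
  apply Finset.sum_pos
  · intro A hA
    obtain ⟨-, hAc⟩ := Finset.mem_powersetCard.1 hA
    apply Finset.sum_pos
    · intro B hB
      exact mul_pos (Finset.prod_pos fun i _ => hv i) (Finset.prod_pos fun i _ => hu i)
    · apply Finset.powersetCard_nonempty.2
      omega
  · apply Finset.powersetCard_nonempty.2
    simpa using hk

lemma mE_symm {R : Type*} [CommSemiring R] (n k j : ℕ) (hj : j ≤ k) (u v : Fin n → R) :
    mE n k j u v = mE n k (k - j) v u := by
  unfold mE
  apply Finset.sum_congr rfl
  intro A hA
  obtain ⟨-, hAc⟩ := Finset.mem_powersetCard.1 hA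
  apply Finset.sum_nbij' (fun B => A \ B) (fun B => A \ B)
  · intro B hB
    obtain ⟨hBA, hBc⟩ := Finset.mem_powersetCard.1 hB
    exact Finset.mem_powersetCard.2 ⟨Finset.sdiff_subset, by rw [Finset.card_sdiff_of_subset hBA, hAc, hBc]⟩
  · intro B hB
    obtain ⟨hBA, hBc⟩ := Finset.mem_powersetCard.1 hB
    exact Finset.mem_powersetCard.2 ⟨Finset.sdiff_subset, by
      rw [Finset.card_sdiff_of_subset hBA, hAc, hBc]; omega⟩
  · intro B hB
    obtain ⟨hBA, hBc⟩ := Finset.mem_powersetCard.1 hB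
    exact Finset.sdiff_sdiff_eq_self hBA
  · intro B hB
    obtain ⟨hBA, hBc⟩ := Finset.mem_powersetCard.1 hB
    exact Finset.sdiff_sdiff_eq_self hBA
  · intro B hB
    obtain ⟨hBA, hBc⟩ := Finset.mem_powersetCard.1 hB
    rw [Finset.sdiff_sdiff_eq_self hBA, mul_comm]

lemma mE_map {R S : Type*} [CommSemiring R] [CommSemiring S] (g : R →+* S) (n k j : ℕ)
    (u v : Fin n → R) : mE n k j (fun i => g (u i)) (fun i => g (v i)) = g (mE n k j u v) := by
  unfold mE
  rw [map_sum]
  apply Finset.sum_congr rfl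
  intro A _
  rw [map_sum]
  apply Finset.sum_congr rfl
  intro B _
  rw [map_mul, map_prod, map_prod]

lemma mE_contR {n k j : ℕ} (w d : Fin n → ℝ) :
    Continuous (fun s : ℝ => mE n k j (fun i => w i + s) d) := by
  unfold mE
  apply continuous_finset_sum
  intro A _
  apply continuous_finset_sum
  intro B _
  apply Continuous.mul continuous_const
  apply continuous_finset_prod
  intro i _
  exact continuous_const.add continuous_id

/-- a real polynomial with positive leading coefficient whose complex roots are all
negative reals has all its coefficients positive -/
lemma PC : ∀ N : ℕ, ∀ q : Polynomial ℝ, q.natDegree = N → q ≠ 0 → 0 < q.leadingCoeff →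
    (∀ z : ℂ, Polynomial.aeval z q = 0 → ∃ t : ℝ, t < 0 ∧ z = (t:ℂ)) →
    ∀ j, j ≤ q.natDegree → 0 < q.coeff j := by
  intro N
  induction N with
  | zero =>
    intro q hdeg hq0 hlead _ j hj
    rw [hdeg] at hj
    interval_cases j
    rw [← hdeg, Polynomial.coeff_natDegree]
    exact hlead
  | succ N ih =>
    intro q hdeg hq0 hlead hroots j hj
    -- find a root
    have hdegC : 0 < (q.map (algebraMap ℝ ℂ)).degree := by
      rw [Polynomial.degree_map]
      rw [Polynomial.degree_eq_natDegree hq0, hdeg]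
      exact_mod_cast Nat.succ_pos N
    obtain ⟨z, hz⟩ := Complex.exists_root hdegC
    have hz' : Polynomial.aeval z q = 0 := by
      rw [Polynomial.aeval_def, ← Polynomial.eval_map]
      exact hz
    obtain ⟨t, ht, rfl⟩ := hroots z hz'
    have htr : q.IsRoot t := by
      have h1 : Polynomial.aeval ((t:ℂ)) q = algebraMap ℝ ℂ (Polynomial.eval t q) := by
        rw [Polynomial.aeval_def, show ((t:ℂ)) = algebraMap ℝ ℂ t from rfl,
          Polynomial.eval₂_at_apply]
      have h2 : algebraMap ℝ ℂ (Polynomial.eval t q) = 0 := by rw [← h1, hz']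
      have h3 : ((Polynomial.eval t q : ℝ) : ℂ) = 0 := by
        rw [← h2]
        rfl
      exact_mod_cast h3
    obtain ⟨q₁, hq₁⟩ := (Polynomial.dvd_iff_isRoot.2 htr)
    have hq₁0 : q₁ ≠ 0 := by
      intro h0
      rw [h0, mul_zero] at hq₁
      exact hq0 hq₁
    have hlc : q₁.leadingCoeff = q.leadingCoeff := by
      rw [hq₁, Polynomial.leadingCoeff_mul, Polynomial.leadingCoeff_X_sub_C, one_mul]
    have hdeg₁ : q₁.natDegree = N := by
      have := Polynomial.natDegree_mul (Polynomial.X_sub_C_ne_zero t) hq₁0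
      rw [← hq₁, hdeg, Polynomial.natDegree_X_sub_C] at this
      omega
    have hroots₁ : ∀ z : ℂ, Polynomial.aeval z q₁ = 0 → ∃ s : ℝ, s < 0 ∧ z = (s:ℂ) := by
      intro z hz1
      apply hroots
      rw [hq₁, map_mul, hz1, mul_zero]
    have hcoeff₁ := ih q₁ hdeg₁ hq₁0 (by rwa [hlc]) hroots₁
    -- coefficients of q
    have hcoeff : ∀ m : ℕ, q.coeff m = (if m = 0 then 0 else q₁.coeff (m - 1)) - t * q₁.coeff m := by
      intro m
      rw [hq₁, sub_mul, Polynomial.coeff_sub, Polynomial.coeff_C_mul]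
      congr 1
      cases m with
      | zero => simp
      | succ m => simp [Polynomial.coeff_X_mul]
    rw [hcoeff j]
    rcases Nat.eq_zero_or_pos j with rfl | hjpos
    · have h0 : 0 < q₁.coeff 0 := hcoeff₁ 0 (Nat.zero_le _)
      norm_num
      nlinarith
    · rw [if_neg (by omega)]
      have h1 : 0 < q₁.coeff (j - 1) := hcoeff₁ (j-1) (by omega)
      have h2 : 0 ≤ q₁.coeff j := by
        rcases Nat.lt_or_ge q₁.natDegree j with h | h
        · rw [Polynomial.coeff_eq_zero_of_natDegree_lt h]
        · exact (hcoeff₁ j h).le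
      nlinarith

/-- the real polynomial `t ↦ esym (u + t v)` -/
def QpR (n k : ℕ) (u v : Fin n → ℝ) : Polynomial ℝ :=
  ∑ j ∈ Finset.range (k+1), Polynomial.C (mE n k j u v) * Polynomial.X ^ j

lemma QpR_coeff (n k : ℕ) (u v : Fin n → ℝ) (j : ℕ) (hj : j ≤ k) :
    (QpR n k u v).coeff j = mE n k j u v := by
  rw [QpR, Polynomial.finset_sum_coeff]
  rw [Finset.sum_eq_single j]
  · simp
  · intro b _ hbj
    rw [Polynomial.coeff_C_mul, Polynomial.coeff_X_pow, if_neg (fun h => hbj h.symm), mul_zero]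
  · intro hj'
    simp at hj'
    omega

lemma QpR_coeff_high (n k : ℕ) (u v : Fin n → ℝ) (j : ℕ) (hj : k < j) :
    (QpR n k u v).coeff j = 0 := by
  rw [QpR, Polynomial.finset_sum_coeff]
  apply Finset.sum_eq_zero
  intro b hb
  have := Finset.mem_range.1 hb
  rw [Polynomial.coeff_C_mul, Polynomial.coeff_X_pow, if_neg (by omega), mul_zero]

lemma QpR_natDegree (n k : ℕ) (u v : Fin n → ℝ) (hv : esym n k v ≠ 0) :
    (QpR n k u v).natDegree = k ∧ (QpR n k u v).leadingCoeff = esym n k v := by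
  have hle : (QpR n k u v).natDegree ≤ k :=
    Polynomial.natDegree_le_iff_coeff_eq_zero.2 fun j hj => QpR_coeff_high n k u v j hj
  have hck : (QpR n k u v).coeff k = esym n k v := by
    rw [QpR_coeff n k u v k le_rfl, mE_self]
  have hge : k ≤ (QpR n k u v).natDegree :=
    Polynomial.le_natDegree_of_ne_zero (by rw [hck]; exact hv)
  have hdeg : (QpR n k u v).natDegree = k := le_antisymm hle hge
  exact ⟨hdeg, by rw [Polynomial.leadingCoeff, hdeg, hck]⟩

lemma QpR_aeval (n k : ℕ) (u v : Fin n → ℝ) (z : ℂ) :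
    Polynomial.aeval z (QpR n k u v) = esym n k (fun i => ((u i : ℝ):ℂ) + z * ((v i : ℝ):ℂ)) := by
  have h1 : Polynomial.aeval z (QpR n k u v)
      = ∑ j ∈ Finset.range (k+1), ((mE n k j u v : ℝ) : ℂ) * z ^ j := by
    rw [QpR, map_sum]
    apply Finset.sum_congr rfl
    intro j _
    rw [map_mul, map_pow, Polynomial.aeval_C, Polynomial.aeval_X]
    rfl
  have h2 : esym n k (fun i => ((u i : ℝ):ℂ) + z * ((v i : ℝ):ℂ))
      = ∑ j ∈ Finset.range (k+1),
          mE n k j (fun i => ((u i : ℝ):ℂ)) (fun i => ((v i : ℝ):ℂ)) * z ^ j := by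
    have := esym_add_mul n k (fun i => ((u i : ℝ):ℂ)) (fun i => ((v i : ℝ):ℂ)) z
    exact this
  rw [h1, h2]
  apply Finset.sum_congr rfl
  intro j _
  congr 1
  exact (mE_map Complex.ofRealHom n k j u v).symm

lemma eval_QpR_real (n k : ℕ) (u v : Fin n → ℝ) (t : ℝ) :
    Polynomial.eval t (QpR n k u v) = ∑ j ∈ Finset.range (k+1), mE n k j u v * t ^ j := by
  rw [QpR, Polynomial.eval_finset_sum]
  apply Finset.sum_congr rfl
  intro j _
  simp

/-- key connectedness lemma: positivity of all coefficients of `t ↦ esym (w + t d)`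
propagates down the ray `w + s·1` -/
lemma ray_pos {n k : ℕ} (hk1 : 1 ≤ k) (hkn : k ≤ n) (w d : Fin n → ℝ)
    (hw : GP n k w) (hd : 0 < esym n k d)
    (hRR : ∀ s : ℝ, 0 ≤ s → ∀ z : ℂ,
      esym n k (fun i => ((w i + s : ℝ) : ℂ) + z * ((d i : ℝ):ℂ)) = 0 → z.im = 0)
    (hbig : ∃ s₀ : ℝ, 0 ≤ s₀ ∧ ∀ j, j ≤ k → 0 < mE n k j (fun i => w i + s₀) d) :
    ∀ j, j ≤ k → 0 < mE n k j w d := by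
  classical
  have hAopen : IsOpen {s : ℝ | ∀ j, j ≤ k → 0 < mE n k j (fun i => w i + s) d} := by
    have heq : {s : ℝ | ∀ j, j ≤ k → 0 < mE n k j (fun i => w i + s) d}
        = ⋂ j ∈ Finset.range (k+1), {s : ℝ | 0 < mE n k j (fun i => w i + s) d} := by
      ext s
      simp only [Set.mem_setOf_eq, Set.mem_iInter, Finset.mem_range]
      constructor
      · intro h j hj
        exact h j (by omega)
      · intro h j hj
        exact h j (by omega)
    rw [heq]
    apply isOpen_biInter_finset
    intro j _
    exact isOpen_lt continuous_const (mE_contR w d)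
  have hVopen : IsOpen {s : ℝ | ∃ j, j ≤ k ∧ mE n k j (fun i => w i + s) d < 0} := by
    have heq : {s : ℝ | ∃ j, j ≤ k ∧ mE n k j (fun i => w i + s) d < 0}
        = ⋃ j ∈ Finset.range (k+1), {s : ℝ | mE n k j (fun i => w i + s) d < 0} := by
      ext s
      simp only [Set.mem_setOf_eq, Set.mem_iUnion, Finset.mem_range]
      constructor
      · rintro ⟨j, hj, h⟩
        exact ⟨j, by omega, h⟩
      · rintro ⟨j, hj, h⟩
        exact ⟨j, by omega, h⟩
    rw [heq]
    apply isOpen_biUnion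
    intro j _
    exact isOpen_lt (mE_contR w d) continuous_const
  have hcover : Set.Ici (0:ℝ) ⊆ {s : ℝ | ∀ j, j ≤ k → 0 < mE n k j (fun i => w i + s) d}
      ∪ {s : ℝ | ∃ j, j ≤ k ∧ mE n k j (fun i => w i + s) d < 0} := by
    intro s hs
    rw [Set.mem_Ici] at hs
    by_cases hsV : ∃ j, j ≤ k ∧ mE n k j (fun i => w i + s) d < 0
    · exact Or.inr hsV
    left
    push_neg at hsV
    have hnonneg : ∀ j, j ≤ k → 0 ≤ mE n k j (fun i => w i + s) d := hsV
    have hc0 : 0 < mE n k 0 (fun i => w i + s) d := by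
      rw [mE_zero]
      exact esym_shift_pos hk1 hkn hw hs
    obtain ⟨hQdeg, hQlc⟩ := QpR_natDegree n k (fun i => w i + s) d hd.ne'
    have hQ0 : QpR n k (fun i => w i + s) d ≠ 0 := by
      intro h0
      rw [h0] at hQlc
      simp at hQlc
      exact hd.ne' hQlc.symm
    have hroots : ∀ z : ℂ, Polynomial.aeval z (QpR n k (fun i => w i + s) d) = 0 →
        ∃ t : ℝ, t < 0 ∧ z = (t:ℂ) := by
      intro z hz
      have him : z.im = 0 := by
        apply hRR s hs z
        rw [← QpR_aeval]
        exact hz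
      have hzre : z = ((z.re : ℝ) : ℂ) := by
        apply Complex.ext
        · simp
        · simp [him]
      have haeval : Polynomial.aeval ((z.re : ℝ) : ℂ) (QpR n k (fun i => w i + s) d)
          = algebraMap ℝ ℂ (Polynomial.eval z.re (QpR n k (fun i => w i + s) d)) := by
        rw [Polynomial.aeval_def, show ((z.re:ℝ):ℂ) = algebraMap ℝ ℂ z.re from rfl,
          Polynomial.eval₂_at_apply]
      have hreal : Polynomial.eval z.re (QpR n k (fun i => w i + s) d) = 0 := by
        have h2 : algebraMap ℝ ℂ (Polynomial.eval z.re (QpR n k (fun i => w i + s) d)) = 0 := by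
          rw [← haeval, ← hzre, hz]
        have h3 : ((Polynomial.eval z.re (QpR n k (fun i => w i + s) d) : ℝ) : ℂ) = 0 := by
          rw [← h2]; rfl
        exact_mod_cast h3
      rcases lt_or_ge z.re 0 with h | h
      · exact ⟨z.re, h, hzre⟩
      · exfalso
        rw [eval_QpR_real] at hreal
        have hge : mE n k 0 (fun i => w i + s) d
            ≤ ∑ j ∈ Finset.range (k+1), mE n k j (fun i => w i + s) d * z.re ^ j := by
          have hterm : ∀ j ∈ Finset.range (k+1),
              0 ≤ mE n k j (fun i => w i + s) d * z.re ^ j := by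
            intro j hj
            exact mul_nonneg (hnonneg j (by have := Finset.mem_range.1 hj; omega))
              (pow_nonneg h j)
          have := Finset.single_le_sum hterm (Finset.mem_range.2 (by omega : 0 < k+1))
          simpa using this
        rw [hreal] at hge
        linarith
    have hlead : 0 < (QpR n k (fun i => w i + s) d).leadingCoeff := by
      rw [hQlc]
      exact hd
    have hPC := PC k (QpR n k (fun i => w i + s) d) hQdeg hQ0 hlead hroots
    intro j hj
    have := hPC j (by rw [hQdeg]; exact hj)
    rwa [QpR_coeff n k _ d j hj] at this
  obtain ⟨s₀, hs₀0, hs₀⟩ := hbig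
  have hAne : (Set.Ici (0:ℝ)
      ∩ {s : ℝ | ∀ j, j ≤ k → 0 < mE n k j (fun i => w i + s) d}).Nonempty :=
    ⟨s₀, Set.mem_Ici.2 hs₀0, hs₀⟩
  have hVempty : ¬ (Set.Ici (0:ℝ)
      ∩ {s : ℝ | ∃ j, j ≤ k ∧ mE n k j (fun i => w i + s) d < 0}).Nonempty := by
    intro hVne
    obtain ⟨p, -, hpA, hpV⟩ := isPreconnected_Ici _ _ hAopen hVopen hcover hAne hVne
    obtain ⟨j, hj, hneg⟩ := hpV
    have := hpA j hj
    linarith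
  have h0A : (0:ℝ) ∈ {s : ℝ | ∀ j, j ≤ k → 0 < mE n k j (fun i => w i + s) d} := by
    rcases hcover (Set.mem_Ici.2 le_rfl) with h | h
    · exact h
    · exact absurd ⟨0, Set.mem_Ici.2 le_rfl, h⟩ hVempty
  intro j hj
  have h := h0A j hj
  have heq : (fun i => w i + (0:ℝ)) = w := funext fun i => add_zero _
  rwa [heq] at h

lemma conj_esym_root {n k : ℕ} (w d : Fin n → ℝ) (z : ℂ)
    (h : esym n k (fun i => ((w i:ℝ):ℂ) + z * ((d i:ℝ):ℂ)) = 0) :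
    esym n k (fun i => ((w i:ℝ):ℂ) + (starRingEnd ℂ z) * ((d i:ℝ):ℂ)) = 0 := by
  calc esym n k (fun i => ((w i:ℝ):ℂ) + (starRingEnd ℂ z) * ((d i:ℝ):ℂ))
      = esym n k (fun i => starRingEnd ℂ (((w i:ℝ):ℂ) + z * ((d i:ℝ):ℂ))) := by
        congr 1
        funext i
        simp [map_add, map_mul, Complex.conj_ofReal]
    _ = starRingEnd ℂ (esym n k (fun i => ((w i:ℝ):ℂ) + z * ((d i:ℝ):ℂ))) :=
        map_esym (starRingEnd ℂ) n k _
    _ = 0 := by rw [h, map_zero]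

lemma hyperbolic_dir {n k : ℕ} (hk1 : 1 ≤ k) (hkn : k ≤ n) (d : Fin n → ℝ)
    (hd : ∀ i, 0 < d i) (w : Fin n → ℝ) :
    ∀ z : ℂ, esym n k (fun i => ((w i:ℝ):ℂ) + z * ((d i:ℝ):ℂ)) = 0 → z.im = 0 := by
  have key : ∀ z : ℂ, 0 < z.im → esym n k (fun i => ((w i:ℝ):ℂ) + z * ((d i:ℝ):ℂ)) ≠ 0 := by
    intro z hz
    apply esym_stab n k hk1 hkn
    intro i
    have : (((w i:ℝ):ℂ) + z * ((d i:ℝ):ℂ)).im = z.im * d i := by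
      simp [Complex.add_im, Complex.mul_im]
    rw [this]
    exact mul_pos hz (hd i)
  intro z hroot
  by_contra him
  rcases lt_or_gt_of_ne him with hneg | hpos
  · exact key (starRingEnd ℂ z) (by simp [Complex.conj_im]; linarith)
      (conj_esym_root w d z hroot)
  · exact key z hpos hroot

lemma esym_contR {n k : ℕ} (w : Fin n → ℝ) :
    Continuous (fun s : ℝ => esym n k (fun i => w i + s)) := by
  unfold esym
  apply continuous_finset_sum
  intro A _
  apply continuous_finset_prod
  intro i _
  exact continuous_const.add continuous_id

lemma seq_approach {p : ℝ × ℝ} {S W : Set (ℝ × ℝ)} (hW : IsOpen W) (hpW : p ∈ W)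
    (hS : ¬ S ∈ 𝓝 p) :
    ∃ q : ℕ → ℝ × ℝ, (∀ m, q m ∈ W ∧ q m ∉ S) ∧
      Tendsto (fun m => (q m).1) atTop (𝓝 p.1) ∧ Tendsto (fun m => (q m).2) atTop (𝓝 p.2) := by
  have hex : ∀ m : ℕ, ∃ q : ℝ × ℝ, q ∈ W ∧ q ∉ S ∧ dist q p < 1/((m:ℝ)+1) := by
    intro m
    by_contra hc
    push_neg at hc
    apply hS
    have hsub : W ∩ Metric.ball p (1/((m:ℝ)+1)) ⊆ S := by
      rintro q ⟨hq1, hq2⟩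
      rw [Metric.mem_ball] at hq2
      by_contra hq3
      exact absurd hq2 (not_lt.2 (hc q hq1 hq3))
    exact Filter.mem_of_superset
      ((hW.inter Metric.isOpen_ball).mem_nhds ⟨hpW, Metric.mem_ball_self (by positivity)⟩) hsub
  choose q hq1 hq2 hq3 using hex
  have hdist : Tendsto (fun m => dist (q m) p) atTop (𝓝 0) := by
    apply squeeze_zero (fun m => dist_nonneg) (fun m => (hq3 m).le)
    exact tendsto_one_div_add_atTop_nhds_zero_nat
  have hq : Tendsto q atTop (𝓝 p) := tendsto_iff_dist_tendsto_zero.2 hdist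
  exact ⟨q, fun m => ⟨hq1 m, hq2 m⟩, (continuous_fst.tendsto p).comp hq,
    (continuous_snd.tendsto p).comp hq⟩

/-- the complexified shifted vectors used in the two-parameter deformation -/
def upv {n : ℕ} (lam mu : Fin n → ℝ) (T : ℝ) (p : ℝ × ℝ) : Fin n → ℂ :=
  fun i => ((lam i:ℝ):ℂ) + ((p.1 * (mu i + T) : ℝ):ℂ) * Complex.I

def vpv {n : ℕ} (mu : Fin n → ℝ) (p : ℝ × ℝ) : Fin n → ℂ :=
  fun i => ((mu i + p.2 : ℝ):ℂ)

def GoodP {n : ℕ} (k : ℕ) (lam mu : Fin n → ℝ) (T : ℝ) (p : ℝ × ℝ) : Prop :=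
  ∀ z : ℂ, esym n k (fun i => upv lam mu T p i + z * vpv mu p i) = 0 → z.im < 0

lemma im_coord {n : ℕ} (lam mu : Fin n → ℝ) (T : ℝ) (p : ℝ × ℝ) (z : ℂ) (i : Fin n) :
    (upv lam mu T p i + z * vpv mu p i).im = p.1 * (mu i + T) + z.im * (mu i + p.2) := by
  simp [upv, vpv, Complex.add_im, Complex.mul_im]

lemma noRealRoot {n k : ℕ} (hk1 : 1 ≤ k) (hkn : k ≤ n) (lam mu : Fin n → ℝ) {T : ℝ}
    (hT : ∀ i, 0 < mu i + T) {p : ℝ × ℝ} (hp : 0 < p.1) (z : ℂ) (him : z.im = 0) :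
    esym n k (fun i => upv lam mu T p i + z * vpv mu p i) ≠ 0 := by
  apply esym_stab n k hk1 hkn
  intro i
  rw [im_coord, him]
  have := hT i
  nlinarith

lemma goodPT {n k : ℕ} (hk1 : 1 ≤ k) (hkn : k ≤ n) (lam mu : Fin n → ℝ) {T : ℝ}
    (hT : ∀ i, 0 < mu i + T) {α : ℝ} (hα : 0 < α) : GoodP k lam mu T (α, T) := by
  intro z hz
  by_contra him
  push_neg at him
  revert hz
  apply esym_stab n k hk1 hkn
  intro i
  rw [im_coord]
  have := hT i
  simp only []
  nlinarith

lemma tendsto_upv {n : ℕ} (lam mu : Fin n → ℝ) (T : ℝ) (q : ℕ → ℝ × ℝ) (p : ℝ × ℝ)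
    (h1 : Tendsto (fun m => (q m).1) atTop (𝓝 p.1)) (i : Fin n) :
    Tendsto (fun m => upv lam mu T (q m) i) atTop (𝓝 (upv lam mu T p i)) := by
  unfold upv
  apply Tendsto.add tendsto_const_nhds
  apply Tendsto.mul _ tendsto_const_nhds
  exact (Complex.continuous_ofReal.tendsto _).comp (h1.mul_const _)

lemma tendsto_vpv {n : ℕ} (mu : Fin n → ℝ) (q : ℕ → ℝ × ℝ) (p : ℝ × ℝ)
    (h2 : Tendsto (fun m => (q m).2) atTop (𝓝 p.2)) (i : Fin n) :
    Tendsto (fun m => vpv mu (q m) i) atTop (𝓝 (vpv mu p i)) := by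
  unfold vpv
  exact (Complex.continuous_ofReal.tendsto _).comp (tendsto_const_nhds.add h2)

lemma esym_vpv_ne {n k : ℕ} (mu : Fin n → ℝ) (p : ℝ × ℝ)
    (h : 0 < esym n k (fun i => mu i + p.2)) : esym n k (vpv mu p) ≠ 0 := by
  have : esym n k (vpv mu p) = ((esym n k (fun i => mu i + p.2) : ℝ) : ℂ) :=
    map_esym Complex.ofRealHom n k (fun i => mu i + p.2)
  rw [this]
  exact_mod_cast h.ne'

lemma hyperbolic_gamma {n k : ℕ} (hk1 : 1 ≤ k) (hkn : k ≤ n) (mu : Fin n → ℝ)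
    (hmu : GP n k mu) (lam : Fin n → ℝ) :
    ∀ z : ℂ, esym n k (fun i => ((lam i:ℝ):ℂ) + z * ((mu i:ℝ):ℂ)) = 0 → z.im = 0 := by
  classical
  obtain ⟨T, hT1, hT⟩ : ∃ T : ℝ, 0 < T ∧ ∀ i, 0 < mu i + T := by
    refine ⟨1 + ∑ i, |mu i|, by positivity, ?_⟩
    intro i
    have h1 : |mu i| ≤ ∑ i', |mu i'| :=
      Finset.single_le_sum (f := fun j => |mu j|) (fun _ _ => abs_nonneg _) (Finset.mem_univ i)
    have h2 : -|mu i| ≤ mu i := neg_abs_le _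
    linarith
  obtain ⟨ε, hε, hGPτ⟩ : ∃ ε : ℝ, 0 < ε ∧ ∀ τ : ℝ, -ε < τ → GP n k (fun i => mu i + τ) := by
    have hopen : IsOpen {τ : ℝ | ∀ j ∈ Finset.Icc 1 k, 0 < esym n j (fun i => mu i + τ)} := by
      have heq : {τ : ℝ | ∀ j ∈ Finset.Icc 1 k, 0 < esym n j (fun i => mu i + τ)}
          = ⋂ j ∈ Finset.Icc 1 k, {τ : ℝ | 0 < esym n j (fun i => mu i + τ)} := by
        ext τ
        simp only [Set.mem_setOf_eq, Set.mem_iInter]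
      rw [heq]
      exact isOpen_biInter_finset fun j _ => isOpen_lt continuous_const (esym_contR mu)
    have h0mem : (0:ℝ) ∈ {τ : ℝ | ∀ j ∈ Finset.Icc 1 k, 0 < esym n j (fun i => mu i + τ)} := by
      intro j hj
      obtain ⟨hj1, hj2⟩ := Finset.mem_Icc.1 hj
      have heq : (fun i => mu i + (0:ℝ)) = mu := funext fun i => add_zero _
      rw [heq]
      exact hmu j hj1 hj2
    obtain ⟨δ, hδ, hball⟩ := Metric.isOpen_iff.1 hopen 0 h0mem
    refine ⟨δ, hδ, ?_⟩
    intro τ hτ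
    rcases lt_or_ge τ 0 with h | h
    · intro j hj1 hj2
      have hmem : τ ∈ Metric.ball (0:ℝ) δ := by
        rw [Metric.mem_ball, Real.dist_eq, sub_zero, abs_of_neg h]
        linarith
      exact hball hmem j (Finset.mem_Icc.2 ⟨hj1, hj2⟩)
    · exact GP_shift hkn hmu h
  have hDopen : IsOpen (Set.Ioi (0:ℝ) ×ˢ Set.Ioo (-ε) (T+1)) := isOpen_Ioi.prod isOpen_Ioo
  have hDconn : IsPreconnected (Set.Ioi (0:ℝ) ×ˢ Set.Ioo (-ε) (T+1)) :=
    ((convex_Ioi (0:ℝ)).prod (convex_Ioo (-ε) (T+1))).isPreconnected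
  have hDmem : ∀ p : ℝ × ℝ, p ∈ Set.Ioi (0:ℝ) ×ˢ Set.Ioo (-ε) (T+1) ↔
      (0 < p.1 ∧ -ε < p.2 ∧ p.2 < T+1) := by
    intro p
    simp [Set.mem_prod, Set.mem_Ioi, Set.mem_Ioo, and_assoc]
  have hVlead : ∀ p : ℝ × ℝ, -ε < p.2 → esym n k (vpv mu p) ≠ 0 := by
    intro p hp
    exact esym_vpv_ne mu p (hGPτ p.2 hp k hk1 le_rfl)
  have claimU : ∀ p ∈ Set.Ioi (0:ℝ) ×ˢ Set.Ioo (-ε) (T+1), GoodP k lam mu T p →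
      p ∈ interior {p' : ℝ × ℝ | p' ∈ Set.Ioi (0:ℝ) ×ˢ Set.Ioo (-ε) (T+1)
        ∧ GoodP k lam mu T p'} := by
    intro p hpD hpG
    rw [mem_interior_iff_mem_nhds]
    by_contra hnb
    obtain ⟨q, hq, hq1, hq2⟩ := seq_approach hDopen hpD hnb
    have hqroot : ∀ m, ∃ z : ℂ,
        esym n k (fun i => upv lam mu T (q m) i + z * vpv mu (q m) i) = 0 ∧ 0 ≤ z.im := by
      intro m
      have h2 := (hq m).2
      rw [Set.mem_setOf_eq] at h2
      push_neg at h2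
      have h3 := h2 (hq m).1
      unfold GoodP at h3
      push_neg at h3
      obtain ⟨z, hz1, hz2⟩ := h3
      exact ⟨z, hz1, hz2⟩
    obtain ⟨z, hz0, hzim⟩ := LIM2 hk1 (fun m => upv lam mu T (q m)) (fun m => vpv mu (q m))
      (upv lam mu T p) (vpv mu p)
      (tendsto_upv lam mu T q p hq1) (tendsto_vpv mu q p hq2)
      (hVlead p ((hDmem p).1 hpD).2.1) hqroot
    exact absurd (hpG z hz0) (not_lt.2 hzim)
  have claimV : ∀ p ∈ Set.Ioi (0:ℝ) ×ˢ Set.Ioo (-ε) (T+1), ¬ GoodP k lam mu T p →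
      p ∈ interior {p' : ℝ × ℝ | p' ∈ Set.Ioi (0:ℝ) ×ˢ Set.Ioo (-ε) (T+1)
        ∧ ¬ GoodP k lam mu T p'} := by
    intro p hpD hpG
    rw [mem_interior_iff_mem_nhds]
    by_contra hnb
    obtain ⟨q, hq, hq1, hq2⟩ := seq_approach hDopen hpD hnb
    have hqgood : ∀ m, ∀ z : ℂ,
        esym n k (fun i => upv lam mu T (q m) i + z * vpv mu (q m) i) = 0 → z.im < 0 := by
      intro m
      have h1 := (hq m).2
      rw [Set.mem_setOf_eq] at h1
      push_neg at h1
      exact h1 (hq m).1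
    have hall := LIM1 hk1 (fun m => upv lam mu T (q m)) (fun m => vpv mu (q m))
      (upv lam mu T p) (vpv mu p)
      (tendsto_upv lam mu T q p hq1) (tendsto_vpv mu q p hq2)
      (hVlead p ((hDmem p).1 hpD).2.1) hqgood
    apply hpG
    intro z hz
    rcases lt_or_ge z.im 0 with h | h
    · exact h
    · exfalso
      have h1 := hall z hz
      have h2 : z.im = 0 := le_antisymm h1 h
      exact noRealRoot hk1 hkn lam mu hT ((hDmem p).1 hpD).1 z h2 hz
  have hcover : Set.Ioi (0:ℝ) ×ˢ Set.Ioo (-ε) (T+1) ⊆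
      interior {p' : ℝ × ℝ | p' ∈ Set.Ioi (0:ℝ) ×ˢ Set.Ioo (-ε) (T+1) ∧ GoodP k lam mu T p'}
      ∪ interior {p' : ℝ × ℝ | p' ∈ Set.Ioi (0:ℝ) ×ˢ Set.Ioo (-ε) (T+1)
          ∧ ¬ GoodP k lam mu T p'} := by
    intro p hp
    by_cases hG : GoodP k lam mu T p
    · exact Or.inl (claimU p hp hG)
    · exact Or.inr (claimV p hp hG)
  have hp₀D : ((1:ℝ), T) ∈ Set.Ioi (0:ℝ) ×ˢ Set.Ioo (-ε) (T+1) := by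
    rw [hDmem]
    exact ⟨one_pos, by linarith, by linarith⟩
  have hp₀G : GoodP k lam mu T ((1:ℝ), T) := goodPT hk1 hkn lam mu hT one_pos
  have hUne : ((Set.Ioi (0:ℝ) ×ˢ Set.Ioo (-ε) (T+1)) ∩
      interior {p' : ℝ × ℝ | p' ∈ Set.Ioi (0:ℝ) ×ˢ Set.Ioo (-ε) (T+1)
        ∧ GoodP k lam mu T p'}).Nonempty :=
    ⟨((1:ℝ), T), hp₀D, claimU _ hp₀D hp₀G⟩
  have hallgood : ∀ p ∈ Set.Ioi (0:ℝ) ×ˢ Set.Ioo (-ε) (T+1), GoodP k lam mu T p := by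
    intro p hp
    by_contra hG
    have hVne' : ((Set.Ioi (0:ℝ) ×ˢ Set.Ioo (-ε) (T+1)) ∩
        interior {p' : ℝ × ℝ | p' ∈ Set.Ioi (0:ℝ) ×ˢ Set.Ioo (-ε) (T+1)
          ∧ ¬ GoodP k lam mu T p'}).Nonempty :=
      ⟨p, hp, claimV p hp hG⟩
    obtain ⟨r, -, hr1, hr2⟩ := hDconn _ _ isOpen_interior isOpen_interior hcover hUne hVne'
    have h1 := interior_subset hr1
    have h2 := interior_subset hr2
    exact h2.2 h1.2
  have hseq : ∀ m : ℕ, GoodP k lam mu T (1/((m:ℝ)+1), 0) := by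
    intro m
    apply hallgood
    rw [hDmem]
    refine ⟨by positivity, by linarith, by linarith⟩
  have hlim : ∀ z : ℂ, esym n k (fun i => ((lam i:ℝ):ℂ) + z * ((mu i:ℝ):ℂ)) = 0 → z.im ≤ 0 := by
    apply LIM1 hk1 (fun m => upv lam mu T (1/((m:ℝ)+1), 0)) (fun m => vpv mu (1/((m:ℝ)+1), 0))
      (fun i => ((lam i:ℝ):ℂ)) (fun i => ((mu i:ℝ):ℂ))
    · intro i
      unfold upv
      have h0 : Tendsto (fun m : ℕ => 1/((m:ℝ)+1)) atTop (𝓝 0) :=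
        tendsto_one_div_add_atTop_nhds_zero_nat
      have h1 : Tendsto (fun m : ℕ => ((1/((m:ℝ)+1) * (mu i + T) : ℝ) : ℂ)) atTop
          (𝓝 (((0:ℝ):ℂ))) := by
        apply (Complex.continuous_ofReal.tendsto _).comp
        simpa using h0.mul_const (mu i + T)
      have h2 := tendsto_const_nhds (x := ((lam i:ℝ):ℂ)) (f := atTop (α := ℕ)) |>.add
        (h1.mul (tendsto_const_nhds (x := Complex.I)))
      simpa using h2
    · intro i
      have heq : (fun m : ℕ => vpv mu (1/((m:ℝ)+1), 0) i) = fun _ => ((mu i : ℝ):ℂ) := by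
        funext m
        simp [vpv]
      rw [heq]
      exact tendsto_const_nhds
    · have hm : esym n k (fun i => ((mu i:ℝ):ℂ)) = ((esym n k mu : ℝ) : ℂ) :=
        map_esym Complex.ofRealHom n k mu
      rw [hm]
      exact_mod_cast (hmu k hk1 le_rfl).ne'
    · intro m
      exact hseq m
  intro z hroot
  have h1 := hlim z hroot
  have h2 := hlim (starRingEnd ℂ z) (conj_esym_root lam mu z hroot)
  rw [Complex.conj_im] at h2
  linarith

lemma mE_gamma_pos {n k : ℕ} (hk1 : 1 ≤ k) (hkn : k ≤ n) {mu x : Fin n → ℝ}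
    (hmu : GP n k mu) (hx : ∀ i, 0 < x i) : ∀ j, j ≤ k → 0 < mE n k j mu x := by
  refine ray_pos hk1 hkn mu x hmu (esym_pos hkn hx) ?_ ?_
  · intro s hs z hz
    exact hyperbolic_dir hk1 hkn x hx (fun i => mu i + s) z hz
  · refine ⟨1 + ∑ i, |mu i|, by positivity, ?_⟩
    intro j hj
    refine mE_pos hj hkn (fun i => ?_) hx
    have h1 : |mu i| ≤ ∑ i', |mu i'| :=
      Finset.single_le_sum (f := fun j' => |mu j'|) (fun _ _ => abs_nonneg _) (Finset.mem_univ i)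
    have h2 : -|mu i| ≤ mu i := neg_abs_le _
    linarith

lemma mE_gamma_gamma {n k : ℕ} (hk1 : 1 ≤ k) (hkn : k ≤ n) {lam mu : Fin n → ℝ}
    (hlam : GP n k lam) (hmu : GP n k mu) : ∀ j, j ≤ k → 0 < mE n k j lam mu := by
  refine ray_pos hk1 hkn lam mu hlam (hmu k hk1 le_rfl) ?_ ?_
  · intro s hs z hz
    exact hyperbolic_gamma hk1 hkn mu hmu (fun i => lam i + s) z hz
  · refine ⟨1 + ∑ i, |lam i|, by positivity, ?_⟩
    intro j hj
    rw [mE_symm n k j hj]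
    have hpos : ∀ i, 0 < lam i + (1 + ∑ i', |lam i'|) := by
      intro i
      have h1 : |lam i| ≤ ∑ i', |lam i'| :=
        Finset.single_le_sum (f := fun j' => |lam j'|) (fun _ _ => abs_nonneg _)
          (Finset.mem_univ i)
      have h2 : -|lam i| ≤ lam i := neg_abs_le _
      linarith
    exact mE_gamma_pos hk1 hkn hmu hpos (k - j) (Nat.sub_le _ _)

lemma esym_gamma_add {n k : ℕ} (hk1 : 1 ≤ k) (hkn : k ≤ n) {lam mu : Fin n → ℝ}
    (hlam : GP n k lam) (hmu : GP n k mu) : 0 < esym n k (fun i => lam i + mu i) := by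
  have h1 : esym n k (fun i => lam i + (1:ℝ) * mu i)
      = ∑ j ∈ Finset.range (k+1), mE n k j lam mu * (1:ℝ) ^ j := esym_add_mul n k lam mu 1
  simp only [one_mul, one_pow, mul_one] at h1
  rw [h1]
  apply Finset.sum_pos
  · intro j hj
    exact mE_gamma_gamma hk1 hkn hlam hmu j (by have := Finset.mem_range.1 hj; omega)
  · exact ⟨0, Finset.mem_range.2 (by omega)⟩

/-- `Γ_k` is a convex cone: closed under addition and positive scalar multiplication. -/
theorem stmt_4 (n k : ℕ) (hk : 1 ≤ k) (hkn : k ≤ n) :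
    (∀ lam mu : Fin n → ℝ, lam ∈ Gamma n k → mu ∈ Gamma n k → lam + mu ∈ Gamma n k) ∧
    (∀ (lam : Fin n → ℝ) (c : ℝ), 0 < c → lam ∈ Gamma n k → c • lam ∈ Gamma n k) := by
  constructor
  · intro lam mu hl hm
    intro i hi1 hi2
    have hl' : GP n i lam := fun j hj1 hj2 => hl j hj1 (hj2.trans hi2)
    have hm' : GP n i mu := fun j hj1 hj2 => hm j hj1 (hj2.trans hi2)
    exact esym_gamma_add hi1 (hi2.trans hkn) hl' hm'
  · intro lam c hc hl i hi1 hi2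
    show 0 < esymm' n i (c • lam)
    have h1 : esymm' n i (c • lam) = esym n i (fun j => c * lam j) := rfl
    rw [h1, esym_smul]
    exact mul_pos (pow_pos hc i) (hl i hi1 hi2)

end
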